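/- Rank-one Bernstein–Sato type formula: let ι, b > 0, ρ = ι + b, and let D be the operator acting on smooth even functions f on ℝ by (Df)(t) = f′(t) + (2ι·(e^{2t}/(e^{2t} − e^{−2t})) + 2b·(e^t/(e^t − e^{−t})))·(f(t) − f(−t)) − ρ·f(t). Then for every real δ, applying D² − (δ+ρ)² to the function f_δ(t) = (cosh t)^δ yields δ·(1 − δ − ι)·(cosh t)^{δ−2} for all t ≠ 0. -/

import Mathlib

/-- The BC₁ Cherednik operator with multiplicity parameters ι, b. -/
noncomputable def cherednikBC1 (ι b : ℝ) (f : ℝ → ℝ) : ℝ → ℝ := fun t =>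
  deriv f t +
    (2 * ι * (Real.exp (2 * t) / (Real.exp (2 * t) - Real.exp (-(2 * t)))) +
      2 * b * (Real.exp t / (Real.exp t - Real.exp (-t)))) * (f t - f (-t)) -
    (ι + b) * f t

theorem bernstein_sato_BC1 (ι b : ℝ) (hι : 0 < ι) (hb : 0 < b) (δ : ℝ)
    (t : ℝ) (ht : t ≠ 0) :
    cherednikBC1 ι b (cherednikBC1 ι b (fun s => Real.cosh s ^ δ)) t -
        (δ + (ι + b)) ^ 2 * Real.cosh t ^ δ
      = δ * (1 - δ - ι) * Real.cosh t ^ (δ - 2) := by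
  have hderiv : ∀ s : ℝ, HasDerivAt (fun s => Real.cosh s ^ δ)
      (δ * Real.cosh s ^ (δ - 1) * Real.sinh s) s := by
    intro s
    have := (Real.hasDerivAt_cosh s).rpow_const (p := δ) (Or.inl (Real.cosh_pos s).ne')
    simpa [mul_comm, mul_assoc, mul_left_comm] using this
  have hderiv1 : ∀ s : ℝ, HasDerivAt (fun s => Real.cosh s ^ (δ - 1))
      ((δ - 1) * Real.cosh s ^ (δ - 2) * Real.sinh s) s := by
    intro s
    have := (Real.hasDerivAt_cosh s).rpow_const (p := δ - 1) (Or.inl (Real.cosh_pos s).ne')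
    have h2 : δ - 1 - 1 = δ - 2 := by ring
    simpa [h2, mul_comm, mul_assoc, mul_left_comm] using this
  have hg : cherednikBC1 ι b (fun s => Real.cosh s ^ δ) =
      fun s => δ * Real.cosh s ^ (δ - 1) * Real.sinh s - (ι + b) * Real.cosh s ^ δ := by
    funext s
    simp only [cherednikBC1, (hderiv s).deriv, Real.cosh_neg]
    ring
  rw [hg]
  have hh : HasDerivAt
      (fun s => δ * Real.cosh s ^ (δ - 1) * Real.sinh s - (ι + b) * Real.cosh s ^ δ)
      (δ * ((δ - 1) * Real.cosh t ^ (δ - 2) * Real.sinh t * Real.sinh t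
          + Real.cosh t ^ (δ - 1) * Real.cosh t)
        - (ι + b) * (δ * Real.cosh t ^ (δ - 1) * Real.sinh t)) t := by
    have h1 := (((hderiv1 t).mul (Real.hasDerivAt_sinh t)).const_mul δ).sub
      ((hderiv t).const_mul (ι + b))
    have heq : (fun x => δ * (Real.cosh x ^ (δ - 1) * Real.sinh x) - (ι + b) * Real.cosh x ^ δ)
        = fun s => δ * Real.cosh s ^ (δ - 1) * Real.sinh s - (ι + b) * Real.cosh s ^ δ := by
      funext x; ring
    replace h1 : HasDerivAt (fun x => δ * (Real.cosh x ^ (δ - 1) * Real.sinh x) - (ι + b) * Real.cosh x ^ δ) _ t := h1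
    rw [heq] at h1
    convert h1 using 1
  simp only [cherednikBC1, hh.deriv, Real.cosh_neg, Real.sinh_neg]
  -- rewrite exponentials in terms of cosh and sinh
  have hc := Real.cosh_pos (x := t)
  have hs : Real.sinh t ≠ 0 := by
    simpa [Real.sinh_eq_zero] using ht
  have e3 : Real.exp t = Real.cosh t + Real.sinh t := (Real.cosh_add_sinh t).symm
  have e4 : Real.exp (-t) = Real.cosh t - Real.sinh t := by
    rw [← Real.cosh_sub_sinh t]
  have e1 : Real.exp (2 * t) = (Real.cosh t + Real.sinh t) ^ 2 := by
    rw [two_mul, Real.exp_add, e3]; ring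
  have e2 : Real.exp (-(2 * t)) = (Real.cosh t - Real.sinh t) ^ 2 := by
    rw [show -(2 * t) = -t + -t by ring, Real.exp_add, e4]; ring
  -- rpow bookkeeping
  have r1 : Real.cosh t ^ (δ - 1) = Real.cosh t ^ (δ - 2) * Real.cosh t := by
    rw [← Real.rpow_add_one hc.ne']
    congr 1
    ring
  have r2 : Real.cosh t ^ δ = Real.cosh t ^ (δ - 2) * Real.cosh t * Real.cosh t := by
    rw [← Real.rpow_add_one hc.ne', ← Real.rpow_add_one hc.ne']
    congr 1
    ring
  have hsq : Real.sinh t ^ 2 = Real.cosh t ^ 2 - 1 := by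
    have := Real.cosh_sq_sub_sinh_sq t; linarith
  rw [e1, e2, e3, e4, r1, r2]
  have d1 : (Real.cosh t + Real.sinh t) ^ 2 - (Real.cosh t - Real.sinh t) ^ 2 ≠ 0 := by
    have : (Real.cosh t + Real.sinh t) ^ 2 - (Real.cosh t - Real.sinh t) ^ 2
        = 4 * Real.sinh t * Real.cosh t := by ring
    rw [this]
    positivity
  have d2 : (Real.cosh t + Real.sinh t) - (Real.cosh t - Real.sinh t) ≠ 0 := by
    have : (Real.cosh t + Real.sinh t) - (Real.cosh t - Real.sinh t) = 2 * Real.sinh t := by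
      ring
    rw [this]
    simpa using hs
  set S := Real.sinh t with hS
  set C := Real.cosh t with hCdef
  set A := C ^ (δ - 2) with hA
  have hC0 : C ≠ 0 := hc.ne'
  rw [show (C + S) ^ 2 - (C - S) ^ 2 = 4 * S * C from by ring,
    show C + S - (C - S) = 2 * S from by ring,
    show δ * (A * C) * S - (ι + b) * (A * C * C) -
        (δ * (A * C) * -S - (ι + b) * (A * C * C)) = 2 * δ * A * C * S from by ring]
  have hK : (2 * ι * ((C + S) ^ 2 / (4 * S * C)) + 2 * b * ((C + S) / (2 * S)))
      * (2 * δ * A * C * S) = ι * δ * A * (C + S) ^ 2 + 2 * b * δ * A * C * (C + S) := by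
    field_simp
    ring
  rw [hK]
  linear_combination (δ * (δ - 1) + ι * δ) * A * hsq
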